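/- Let P be a commutative monoid that is sharp, quasi-integral, and finitely generated. Then P^int (the image of P in its groupification) is sharp and fine, and P^sat (the saturation of P^int inside P^gp) is an fs monoid. -/

import Mathlib

/-- `η : M →+ G` exhibits the abelian group `G` as the groupification of the
commutative monoid `M`. -/
def IsGroupification {M G : Type*} [AddCommMonoid M] [AddCommGroup G] (η : M →+ G) : Prop :=
  (∀ x : G, ∃ a b : M, x = η a - η b) ∧
  (∀ a b : M, η a = η b ↔ ∃ k : M, a + k = b + k)

/-- A commutative monoid is sharp if its unit group is trivial. -/
def IsSharp (M : Type*) [AddCommMonoid M] : Prop := ∀ x : M, IsAddUnit x → x = 0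

/-- A morphism of monoids is local if the preimage of the unit group is the unit group. -/
def IsLocalMonoidHom {N M : Type*} [AddCommMonoid N] [AddCommMonoid M] (f : N →+ M) : Prop :=
  ∀ n : N, IsAddUnit (f n) → IsAddUnit n

/-- `(P, iM, iL)` is the push-out `M ⊔_N L` of `f : N →+ M` and `g : N →+ L` in the
category of commutative monoids. -/
def IsMonPushout {N M L P : Type*} [AddCommMonoid N] [AddCommMonoid M] [AddCommMonoid L]
    [AddCommMonoid P] (f : N →+ M) (g : N →+ L) (iM : M →+ P) (iL : L →+ P) : Prop :=
  iM.comp f = iL.comp g ∧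
  ∀ (Q : Type*) [AddCommMonoid Q] (jM : M →+ Q) (jL : L →+ Q),
    jM.comp f = jL.comp g → ∃! h : P →+ Q, h.comp iM = jM ∧ h.comp iL = jL

/-- The saturation of a subset `P` of an abelian group `G`:
`P^sat = { x ∈ G | ∃ a ≥ 1, a • x ∈ P }`. -/
def saturationOf {G : Type*} [AddCommGroup G] (P : Set G) : Set G :=
  {x : G | ∃ a : ℕ, 0 < a ∧ a • x ∈ P}

section GordanAux

variable {G H : Type*} [AddCommGroup G] [AddCommGroup H]

/-- The saturation as an `AddSubmonoid`. -/
def satM (Q : AddSubmonoid G) : AddSubmonoid G where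
  carrier := saturationOf (Q : Set G)
  zero_mem' := ⟨1, one_pos, by simpa using Q.zero_mem⟩
  add_mem' := by
    rintro x y ⟨a, ha, hax⟩ ⟨b, hb, hby⟩
    refine ⟨a * b, Nat.mul_pos ha hb, ?_⟩
    have : (a * b) • (x + y) = b • (a • x) + a • (b • y) := by
      simp only [smul_add, ← mul_smul]
      rw [mul_comm b a]
    rw [this]
    exact add_mem (AddSubmonoid.nsmul_mem _ hax b) (AddSubmonoid.nsmul_mem _ hby a)

lemma mem_satM {Q : AddSubmonoid G} {x : G} :
    x ∈ satM Q ↔ ∃ a : ℕ, 0 < a ∧ a • x ∈ Q := Iff.rfl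

lemma coe_satM (Q : AddSubmonoid G) : (satM Q : Set G) = saturationOf (Q : Set G) := rfl

lemma mem_closure_finset {s : Finset G} {x : G} :
    x ∈ AddSubmonoid.closure (s : Set G) ↔ ∃ n : G → ℕ, x = ∑ v ∈ s, n v • v := by
  classical
  constructor
  · intro hx
    induction hx using AddSubmonoid.closure_induction with
    | mem v hv =>
        exact ⟨fun w => if w = v then 1 else 0, by
          simp only [ite_smul, one_smul, zero_smul, Finset.sum_ite_eq' s v]
          simp [Finset.mem_coe.mp hv]⟩
    | zero => exact ⟨0, by simp⟩
    | add x y _ _ hx hy =>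
        obtain ⟨n, hn⟩ := hx; obtain ⟨m, hm⟩ := hy
        exact ⟨n + m, by simp [hn, hm, add_smul, Finset.sum_add_distrib]⟩
  · rintro ⟨n, rfl⟩
    exact AddSubmonoid.sum_mem _ fun v hv =>
      AddSubmonoid.nsmul_mem _ (AddSubmonoid.subset_closure hv) _

section Pi
variable {ι : Type*} [Fintype ι]

def intCastHom : (ι → ℤ) →+ (ι → ℚ) where
  toFun x i := (x i : ℚ)
  map_zero' := by ext i; simp
  map_add' x y := by ext i; simp

lemma intCastHom_injective : Function.Injective (intCastHom (ι := ι)) := by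
  intro x y h
  funext i
  exact Int.cast_injective (congrFun h i)

lemma mem_satM_closure_iff (s : Finset (ι → ℤ)) (x : ι → ℤ) :
    x ∈ satM (AddSubmonoid.closure (s : Set (ι → ℤ))) ↔
      ∃ l : (ι → ℤ) → ℚ, (∀ v ∈ s, 0 ≤ l v) ∧
        intCastHom x = ∑ v ∈ s, l v • intCastHom v := by
  constructor
  · rintro ⟨a, ha, hax⟩
    obtain ⟨n, hn⟩ := mem_closure_finset.mp hax
    have ha' : (a : ℚ) ≠ 0 := Nat.cast_ne_zero.mpr ha.ne'
    refine ⟨fun v => (n v : ℚ) / a, fun v _ => by positivity, ?_⟩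
    have h1 : ((a : ℚ) • intCastHom x : ι → ℚ) = ∑ v ∈ s, (n v : ℚ) • intCastHom v := by
      rw [Nat.cast_smul_eq_nsmul, ← map_nsmul, hn, map_sum]
      simp only [map_nsmul, Nat.cast_smul_eq_nsmul]
    calc intCastHom x = (a : ℚ)⁻¹ • ((a : ℚ) • intCastHom x) := (inv_smul_smul₀ ha' _).symm
      _ = ∑ v ∈ s, ((n v : ℚ) / a) • intCastHom v := by
          rw [h1, Finset.smul_sum]
          refine Finset.sum_congr rfl fun v _ => ?_
          rw [smul_smul, inv_mul_eq_div]
  · rintro ⟨l, hl, hx⟩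
    classical
    set a : ℕ := ∏ v ∈ s, (l v).den with hadef
    have ha : 0 < a := Finset.prod_pos fun v _ => (l v).pos
    set n : (ι → ℤ) → ℕ := fun v => (a / (l v).den) * (l v).num.toNat with hndef
    have key : ∀ v ∈ s, ((n v : ℚ)) = (a : ℚ) * l v := by
      intro v hv
      have hd : (l v).den ∣ a := Finset.dvd_prod_of_mem _ hv
      have h1 : ((a / (l v).den) * (l v).den : ℕ) = a := Nat.div_mul_cancel hd
      have h2 : ((l v).num.toNat : ℚ) = ((l v).num : ℚ) := by
        exact_mod_cast Int.toNat_of_nonneg (Rat.num_nonneg.mpr (hl v hv))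
      calc ((n v : ℚ)) = ((a / (l v).den : ℕ) : ℚ) * ((l v).num : ℚ) := by
              rw [hndef]; push_cast [h2]; ring
        _ = ((a / (l v).den : ℕ) : ℚ) * ((l v) * ((l v).den : ℚ)) := by
              rw [Rat.mul_den_eq_num]
        _ = (((a / (l v).den) * (l v).den : ℕ) : ℚ) * l v := by push_cast; ring
        _ = (a : ℚ) * l v := by rw [h1]
    refine ⟨a, ha, ?_⟩
    have h3 : intCastHom (a • x) = intCastHom (∑ v ∈ s, n v • v) := by
      rw [map_nsmul, map_sum, ← Nat.cast_smul_eq_nsmul ℚ, hx, Finset.smul_sum]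
      refine Finset.sum_congr rfl fun v hv => ?_
      rw [map_nsmul, ← Nat.cast_smul_eq_nsmul ℚ, smul_smul, key v hv]
    have h4 := intCastHom_injective h3
    rw [h4]
    exact AddSubmonoid.sum_mem _ fun v hv =>
      AddSubmonoid.nsmul_mem _ (AddSubmonoid.subset_closure hv) _

end Pi

lemma gordan_pi {ι : Type*} [Fintype ι] (Q : AddSubmonoid (ι → ℤ)) (hQ : Q.FG) :
    (satM Q).FG := by
  classical
  obtain ⟨s, hs⟩ := hQ
  set D : Set (ι → ℤ) := {x | ∃ l : (ι → ℤ) → ℚ, (∀ v ∈ s, 0 ≤ l v) ∧ (∀ v ∈ s, l v ≤ 1) ∧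
    intCastHom x = ∑ v ∈ s, l v • intCastHom v} with hD
  have hDsat : D ⊆ (satM Q : Set _) := by
    rintro x ⟨l, h0, h1, hx⟩
    rw [← hs]
    exact (mem_satM_closure_iff s x).mpr ⟨l, h0, hx⟩
  have hDfin : D.Finite := by
    have hsub : D ⊆ Set.pi Set.univ (fun i => Set.Icc (-(∑ v ∈ s, |v i|)) (∑ v ∈ s, |v i|)) := by
      rintro x ⟨l, h0, h1, hx⟩ i _
      have hxi : (x i : ℚ) = ∑ v ∈ s, l v * (v i : ℚ) := by
        have := congrFun hx i
        simpa [intCastHom, Finset.sum_apply] using this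
      have habs : |(x i : ℚ)| ≤ ∑ v ∈ s, |(v i : ℚ)| := by
        rw [hxi]
        refine (Finset.abs_sum_le_sum_abs _ _).trans ?_
        refine Finset.sum_le_sum fun v hv => ?_
        rw [abs_mul]
        calc |l v| * |(v i : ℚ)| ≤ 1 * |(v i : ℚ)| := by
              apply mul_le_mul_of_nonneg_right _ (abs_nonneg _)
              rw [abs_of_nonneg (h0 v hv)]; exact h1 v hv
          _ = |(v i : ℚ)| := one_mul _
      have h2 : |x i| ≤ ∑ v ∈ s, |v i| := by exact_mod_cast habs
      exact Set.mem_Icc.mpr (abs_le.mp h2)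
    exact (Set.Finite.pi fun i => Set.finite_Icc _ _).subset hsub
  have key : ∀ N : ℕ, ∀ x : ι → ℤ, ∀ l : (ι → ℤ) → ℚ, (∀ v ∈ s, 0 ≤ l v) →
      intCastHom x = ∑ v ∈ s, l v • intCastHom v → (∑ v ∈ s, ⌊l v⌋) ≤ (N : ℤ) →
      x ∈ AddSubmonoid.closure D := by
    intro N
    induction N with
    | zero =>
      intro x l h0 hx hsum
      have hfl : ∀ v ∈ s, (0:ℤ) ≤ ⌊l v⌋ := fun v hv => Int.floor_nonneg.mpr (h0 v hv)
      have hall : ∀ v ∈ s, l v ≤ 1 := by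
        intro v hv
        by_contra hgt
        push_neg at hgt
        have h1 : (1:ℤ) ≤ ⌊l v⌋ := Int.le_floor.mpr (by exact_mod_cast hgt.le)
        have h2 : ⌊l v⌋ ≤ ∑ w ∈ s, ⌊l w⌋ := Finset.single_le_sum (fun w hw => hfl w hw) hv
        omega
      exact AddSubmonoid.subset_closure ⟨l, h0, hall, hx⟩
    | succ N ih =>
      intro x l h0 hx hsum
      by_cases hall : ∀ v ∈ s, l v ≤ 1
      · exact AddSubmonoid.subset_closure ⟨l, h0, hall, hx⟩
      · push_neg at hall
        obtain ⟨v0, hv0s, hv0⟩ := hall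
        set l' : (ι → ℤ) → ℚ := fun v => l v - if v = v0 then 1 else 0 with hl'
        have h0' : ∀ v ∈ s, 0 ≤ l' v := by
          intro v hv
          by_cases h : v = v0
          · subst h
            have hlv : l' v = l v - 1 := by simp [hl']
            rw [hlv]; linarith
          · simpa [hl', h] using h0 v hv
        have hx' : intCastHom (x - v0) = ∑ v ∈ s, l' v • intCastHom v := by
          rw [map_sub]
          simp only [hl', sub_smul, ite_smul, one_smul, zero_smul]
          rw [Finset.sum_sub_distrib, hx, Finset.sum_ite_eq' s v0]
          simp [hv0s]
        have hfloor : ∀ v ∈ s, ⌊l' v⌋ = ⌊l v⌋ - if v = v0 then 1 else 0 := by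
          intro v hv
          by_cases h : v = v0
          · subst h
            simp only [hl', if_pos rfl]
            exact_mod_cast Int.floor_sub_intCast (l v) 1
          · simp [hl', h]
        have hsum' : (∑ v ∈ s, ⌊l' v⌋) ≤ (N : ℤ) := by
          rw [Finset.sum_congr rfl hfloor, Finset.sum_sub_distrib, Finset.sum_ite_eq' s v0]
          simp only [hv0s, if_true]
          push_cast at hsum ⊢
          omega
        have hxv0 : x - v0 ∈ AddSubmonoid.closure D := ih (x - v0) l' h0' hx' hsum'
        have hv0D : v0 ∈ D := by
          refine ⟨fun v => if v = v0 then 1 else 0, ?_, ?_, ?_⟩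
          · intro v _; dsimp only; split <;> norm_num
          · intro v _; dsimp only; split <;> norm_num
          · simp only [ite_smul, one_smul, zero_smul, Finset.sum_ite_eq' s v0]
            simp [hv0s]
        have hadd := AddSubmonoid.add_mem _ hxv0 (AddSubmonoid.subset_closure hv0D)
        simpa [sub_add_cancel] using hadd
  refine ⟨hDfin.toFinset, ?_⟩
  rw [Set.Finite.coe_toFinset]
  apply le_antisymm
  · rw [AddSubmonoid.closure_le]; exact hDsat
  · intro x hx
    rw [← hs] at hx
    obtain ⟨l, h0, hxeq⟩ := (mem_satM_closure_iff s x).mp hx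
    exact key (∑ v ∈ s, ⌊l v⌋).toNat x l h0 hxeq (Int.self_le_toNat _)

lemma satM_map_equiv (e : G ≃+ H) (Q : AddSubmonoid G) :
    satM (Q.map e.toAddMonoidHom) = (satM Q).map e.toAddMonoidHom := by
  ext y
  rw [AddSubmonoid.mem_map_equiv]
  simp only [mem_satM, AddSubmonoid.mem_map_equiv, map_nsmul]

lemma gordan_free {G : Type*} [AddCommGroup G] [Module.Finite ℤ G] [Module.Free ℤ G]
    (Q : AddSubmonoid G) (hQ : Q.FG) : (satM Q).FG := by
  let b := Module.Free.chooseBasis ℤ G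
  let e : G ≃+ (Module.Free.ChooseBasisIndex ℤ G → ℤ) := b.equivFun.toAddEquiv
  have h1 : (satM (Q.map e.toAddMonoidHom)).FG := gordan_pi _ (hQ.map _)
  rw [satM_map_equiv] at h1
  have h2 := h1.map e.symm.toAddMonoidHom
  have h3 : ((satM Q).map e.toAddMonoidHom).map e.symm.toAddMonoidHom = satM Q := by
    ext x
    simp [AddSubmonoid.mem_map_equiv]
  rwa [h3] at h2

lemma gordan {G : Type*} [AddCommGroup G] [Module.Finite ℤ G] (Q : AddSubmonoid G)
    (hQ : Q.FG) : (satM Q).FG := by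
  classical
  set T := Submodule.torsion ℤ G with hT
  let π : G →+ G ⧸ T := T.mkQ.toAddMonoidHom
  have hker : ∀ y : G, π y = 0 ↔ y ∈ T := fun y => Submodule.Quotient.mk_eq_zero T
  have h1 : (satM (Q.map π)).FG := gordan_free _ (hQ.map π)
  have heq : satM Q = (satM (Q.map π)).comap π := by
    ext x
    constructor
    · rintro ⟨a, ha, hax⟩
      exact AddSubmonoid.mem_comap.mpr ⟨a, ha, ⟨a • x, hax, map_nsmul π a x⟩⟩
    · intro hx
      obtain ⟨a, ha, hax⟩ := AddSubmonoid.mem_comap.mp hx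
      obtain ⟨q, hq, hqe⟩ := hax
      have hmem : q - a • x ∈ T := by
        rw [← hker]
        rw [map_sub, map_nsmul, hqe, sub_self]
      obtain ⟨m, hm⟩ := hmem
      rw [Submonoid.smul_def] at hm
      have hm0 : (m : ℤ) ≠ 0 := mem_nonZeroDivisors_iff_ne_zero.mp m.2
      set k : ℕ := (m : ℤ).natAbs with hk
      have hkpos : 0 < k := Int.natAbs_pos.mpr hm0
      have hzero : (k : ℤ) • (q - a • x) = 0 := by
        rcases Int.natAbs_eq (m : ℤ) with h | h
        · rw [← h]; exact hm
        · have : ((k : ℤ)) = -(m : ℤ) := by omega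
          rw [this, neg_smul, hm, neg_zero]
      have hfin : (k * a) • x = k • q := by
        rw [smul_sub, sub_eq_zero] at hzero
        rw [mul_smul]
        have h1 : (k : ℤ) • q = (k : ℕ) • q := natCast_zsmul q k
        have h2 : (k : ℤ) • (a • x) = (k : ℕ) • (a • x) := natCast_zsmul _ k
        rw [h1, h2] at hzero
        exact hzero.symm
      exact ⟨k * a, Nat.mul_pos hkpos ha, hfin ▸ AddSubmonoid.nsmul_mem _ hq k⟩
  obtain ⟨w, hw⟩ := h1
  have hsur : Function.Surjective π := Submodule.mkQ_surjective T
  choose g hg using hsur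
  haveI : Module.Finite ℤ ↥T := Module.Finite.iff_fg.mpr (IsNoetherian.noetherian T)
  haveI : Finite ↥T := Module.finite_of_fg_torsion ↥T Submodule.torsion_isTorsion
  have hTfin : (T : Set G).Finite := Set.toFinite _
  refine ⟨w.image g ∪ hTfin.toFinset, ?_⟩
  rw [heq]
  apply le_antisymm
  · rw [AddSubmonoid.closure_le]
    rintro x hx
    simp only [Finset.coe_union, Set.mem_union, Finset.coe_image, Set.mem_image,
      Finset.mem_coe, Set.Finite.coe_toFinset] at hx
    rcases hx with ⟨y, hy, rfl⟩ | hx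
    · show π (g y) ∈ satM (Q.map π)
      rw [hg, ← hw]
      exact AddSubmonoid.subset_closure hy
    · show π x ∈ satM (Q.map π)
      rw [(hker x).mpr hx]
      exact zero_mem _
  · intro x hx
    have hpx : π x ∈ AddSubmonoid.closure (w : Set (G ⧸ T)) := by
      rw [hw]; exact hx
    have himg : (w : Set (G ⧸ T)) = π '' (g '' w) := by
      ext y
      constructor
      · intro hy; exact ⟨g y, ⟨y, hy, rfl⟩, hg y⟩
      · rintro ⟨z, ⟨y, hy, rfl⟩, rfl⟩; rw [hg]; exact hy
    rw [himg, ← AddMonoidHom.map_mclosure] at hpx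
    obtain ⟨z, hz, hzx⟩ := hpx
    have hxz : x - z ∈ T := by
      rw [← hker, map_sub, hzx, sub_self]
    have hx1 : x = z + (x - z) := by abel
    rw [hx1]
    refine AddSubmonoid.add_mem _ ?_ ?_
    · refine AddSubmonoid.closure_mono ?_ hz
      intro u hu
      simp only [Finset.coe_union, Set.mem_union, Finset.coe_image]
      exact Or.inl hu
    · refine AddSubmonoid.subset_closure ?_
      simp only [Finset.coe_union, Set.mem_union, Set.Finite.coe_toFinset]
      exact Or.inr hxz

private theorem stmt17' {P Pgp : Type*} [AddCommMonoid P] [AddCommGroup Pgp]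
    (ηP : P →+ Pgp)
    (hgpP : (∀ x : Pgp, ∃ a b : P, x = ηP a - ηP b) ∧
      (∀ a b : P, ηP a = ηP b ↔ ∃ k : P, a + k = b + k))
    (hsharp : ∀ x : P, IsAddUnit x → x = 0)
    (hqi : ∀ p : P, ηP p = 0 → p = 0)
    (hfg : AddMonoid.FG P) :
    (∀ x ∈ AddMonoidHom.mrange ηP, -x ∈ AddMonoidHom.mrange ηP → x = 0) ∧
    (AddMonoidHom.mrange ηP).FG ∧
    (∀ x : Pgp,
      (∃ a : ℕ, 0 < a ∧ a • x ∈ saturationOf (↑(AddMonoidHom.mrange ηP) : Set Pgp)) →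
        x ∈ saturationOf (↑(AddMonoidHom.mrange ηP) : Set Pgp)) ∧
    (∃ S : Finset Pgp,
      (↑(AddSubmonoid.closure (S : Set Pgp)) : Set Pgp) =
        saturationOf (↑(AddMonoidHom.mrange ηP) : Set Pgp)) := by
  have hQfg : (AddMonoidHom.mrange ηP).FG := by
    rw [AddMonoidHom.mrange_eq_map]
    exact hfg.fg_top.map ηP
  refine ⟨?_, hQfg, ?_, ?_⟩
  · rintro x ⟨a, rfl⟩ ⟨b, hb⟩
    have h0 : ηP (a + b) = 0 := by rw [map_add, hb]; abel
    have hab : a + b = 0 := hqi _ h0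
    have ha : a = 0 := hsharp a ⟨⟨a, b, hab, by rw [add_comm]; exact hab⟩, rfl⟩
    rw [ha, map_zero]
  · rintro x ⟨a, ha, b, hb, hbx⟩
    exact ⟨b * a, Nat.mul_pos hb ha, by rwa [mul_smul]⟩
  · have hfgP : AddGroup.FG Pgp := by
      obtain ⟨t, ht⟩ := hfg.fg_top
      rw [AddGroup.fg_iff]
      refine ⟨⇑ηP '' ↑t, ?_, Set.Finite.image _ t.finite_toSet⟩
      rw [eq_top_iff]
      intro x _
      have hmem : ∀ p : P, ηP p ∈ AddSubgroup.closure (⇑ηP '' ↑t) := by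
        intro p
        have hp : p ∈ AddSubmonoid.closure (t : Set P) := ht ▸ AddSubmonoid.mem_top p
        have h2 : ηP p ∈ AddSubmonoid.closure (⇑ηP '' ↑t) := by
          rw [← AddMonoidHom.map_mclosure]
          exact ⟨p, hp, rfl⟩
        have h3 : AddSubmonoid.closure (⇑ηP '' ↑t) ≤
            (AddSubgroup.closure (⇑ηP '' ↑t)).toAddSubmonoid := by
          rw [AddSubmonoid.closure_le]
          exact AddSubgroup.subset_closure
        exact h3 h2
      obtain ⟨a, b, rfl⟩ := hgpP.1 x
      exact sub_mem (hmem a) (hmem b)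
    haveI : Module.Finite ℤ Pgp := Module.Finite.iff_addGroup_fg.mpr hfgP
    obtain ⟨S, hS⟩ := gordan (AddMonoidHom.mrange ηP) hQfg
    exact ⟨S, by rw [hS]; rfl⟩

end GordanAux

/-- Let `P` be a commutative monoid that is sharp, quasi-integral, and finitely
generated.  Then `P^int` (the image of `P` in its groupification) is sharp and fine
(finitely generated; integrality is automatic for a submonoid of a group), and `P^sat`
(the saturation of `P^int` inside `P^gp`) is an fs monoid (saturated and finitely
generated). -/
theorem stmt17 {P Pgp : Type*} [AddCommMonoid P] [AddCommGroup Pgp]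
    (ηP : P →+ Pgp) (hgpP : IsGroupification ηP)
    (hsharp : IsSharp P)
    (hqi : ∀ p : P, ηP p = 0 → p = 0)
    (hfg : AddMonoid.FG P) :
    (∀ x ∈ AddMonoidHom.mrange ηP, -x ∈ AddMonoidHom.mrange ηP → x = 0) ∧
    (AddMonoidHom.mrange ηP).FG ∧
    (∀ x : Pgp,
      (∃ a : ℕ, 0 < a ∧ a • x ∈ saturationOf (↑(AddMonoidHom.mrange ηP) : Set Pgp)) →
        x ∈ saturationOf (↑(AddMonoidHom.mrange ηP) : Set Pgp)) ∧
    (∃ S : Finset Pgp,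
      (↑(AddSubmonoid.closure (S : Set Pgp)) : Set Pgp) =
        saturationOf (↑(AddMonoidHom.mrange ηP) : Set Pgp)) := by
  exact stmt17' ηP ⟨hgpP.1, hgpP.2⟩ hsharp hqi hfg
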